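/- Consider the semi-discrete system ∂_τ z_n = (z_{n-1} - z_n)(1 + y_n z_n), -∂_τ y_n = (y_{n+1} - y_n)(1 + y_n z_n) for n ∈ ℤ. Define the 2×2 matrices L_n(λ) = (1+y_n z_n)^{-1/2} · [[1/λ, (λ - 1/λ) z_n], [-y_n/λ, λ + y_n z_n/λ]] and U_n(λ) = [[(λ²-1)/2 + y_n z_{n-1}/2, (1-λ²) z_{n-1}], [y_n, -(λ²-1)/2 - y_n z_{n-1}/2]]. Then the zero-curvature (compatibility) equation ∂_τ L_n = U_{n+1} L_n - L_n U_n holds for every λ ∈ ℂ if and only if (z_n, y_n) satisfy the semi-discrete system (wherever 1 + y_n z_n ≠ 0). -/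

import Mathlib

open Matrix

/-- The Lax matrix `L_n(λ)` of the weak noise theory of the continuous time q-TASEP. -/
noncomputable def Lmat (z y : ℤ → ℝ → ℝ) (n : ℤ) (τ : ℝ) (lam : ℂ) :
    Matrix (Fin 2) (Fin 2) ℂ :=
  ((Real.sqrt (1 + y n τ * z n τ))⁻¹ : ℝ) •
    !![1 / lam, (lam - 1 / lam) * (z n τ : ℂ);
       -(y n τ : ℂ) / lam, lam + (y n τ : ℂ) * (z n τ : ℂ) / lam]

/-- The Lax matrix `U_n(λ)` of the weak noise theory of the continuous time q-TASEP. -/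
noncomputable def Umat (z y : ℤ → ℝ → ℝ) (n : ℤ) (τ : ℝ) (lam : ℂ) :
    Matrix (Fin 2) (Fin 2) ℂ :=
  !![(lam ^ 2 - 1) / 2 + (y n τ : ℂ) * (z (n - 1) τ : ℂ) / 2,
       (1 - lam ^ 2) * (z (n - 1) τ : ℂ);
     (y n τ : ℂ),
       -((lam ^ 2 - 1) / 2) - (y n τ : ℂ) * (z (n - 1) τ : ℂ) / 2]

lemma Lmat_entry_hasDerivAt (z y : ℤ → ℝ → ℝ) (n : ℤ) (τ : ℝ) (lam : ℂ)
    (zd yd : ℝ) (hz : HasDerivAt (z n) zd τ) (hy : HasDerivAt (y n) yd τ)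
    (hp : ∀ s, 0 < 1 + y n s * z n s) (i j : Fin 2) :
    HasDerivAt (fun s => Lmat z y n s lam i j)
      ((-((yd * z n τ + y n τ * zd) / (2 * Real.sqrt (1 + y n τ * z n τ))
            / (1 + y n τ * z n τ))) •
          (!![1 / lam, (lam - 1 / lam) * (z n τ : ℂ);
              -(y n τ : ℂ) / lam, lam + (y n τ : ℂ) * (z n τ : ℂ) / lam] i j)
        + ((Real.sqrt (1 + y n τ * z n τ))⁻¹ : ℝ) •
          (!![0, (lam - 1 / lam) * (zd : ℂ);
              -(yd : ℂ) / lam, ((yd : ℂ) * (z n τ : ℂ) + (y n τ : ℂ) * (zd : ℂ)) / lam] i j)) τ := by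
  have hg : HasDerivAt (fun s => 1 + y n s * z n s) (yd * z n τ + y n τ * zd) τ :=
    (hy.mul hz).const_add 1
  have hs := hg.sqrt (hp τ).ne'
  have hR : Real.sqrt (1 + y n τ * z n τ) ≠ 0 := Real.sqrt_ne_zero'.mpr (hp τ)
  have hinv : HasDerivAt (fun s => (Real.sqrt (1 + y n s * z n s))⁻¹) _ τ := hs.inv hR
  rw [Real.sq_sqrt (hp τ).le] at hinv
  have e00 : HasDerivAt (fun _ : ℝ => (1 / lam : ℂ)) 0 τ := hasDerivAt_const τ _
  have e01 : HasDerivAt (fun s => (lam - 1 / lam) * (z n s : ℂ)) ((lam - 1 / lam) * (zd : ℂ)) τ :=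
    (hz.ofReal_comp).const_mul _
  have e10 : HasDerivAt (fun s => -(y n s : ℂ) / lam) (-(yd : ℂ) / lam) τ :=
    (hy.ofReal_comp).neg.div_const _
  have e11 : HasDerivAt (fun s => lam + (y n s : ℂ) * (z n s : ℂ) / lam)
      (((yd : ℂ) * (z n τ : ℂ) + (y n τ : ℂ) * (zd : ℂ)) / lam) τ :=
    (((hy.ofReal_comp).mul (hz.ofReal_comp)).div_const _).const_add _
  fin_cases i <;> fin_cases j <;>
    simp only [Lmat, Matrix.smul_apply, Matrix.cons_val', Matrix.cons_val_zero,
      Matrix.cons_val_one, Matrix.head_cons, Matrix.empty_val', Matrix.cons_val_fin_one,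
      Matrix.head_fin_const, Fin.mk_zero, Fin.mk_one, Fin.isValue, Matrix.of_apply]
  · convert hinv.smul e00 using 1; rfl; rfl; module
  · convert hinv.smul e01 using 1; rfl; rfl; module
  · convert hinv.smul e10 using 1; rfl; rfl; module
  · convert hinv.smul e11 using 1; rfl; rfl; module

set_option maxHeartbeats 4000000 in
/-- The zero-curvature equation `∂_τ L_n = U_{n+1} L_n - L_n U_n` holds for every
spectral parameter `λ ≠ 0` if and only if `(z_n, y_n)` solve the semi-discrete
system `∂_τ z_n = (z_{n-1}-z_n)(1+y_n z_n)`, `-∂_τ y_n = (y_{n+1}-y_n)(1+y_n z_n)`. -/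
theorem qTASEP_lax_pair_iff (z y : ℤ → ℝ → ℝ)
    (hzd : ∀ n, Differentiable ℝ (z n)) (hyd : ∀ n, Differentiable ℝ (y n))
    (hpos : ∀ n τ, 0 < 1 + y n τ * z n τ) :
    (∀ lam : ℂ, lam ≠ 0 → ∀ n : ℤ, ∀ τ : ℝ, ∀ i j : Fin 2,
        HasDerivAt (fun s => Lmat z y n s lam i j)
          ((Umat z y (n + 1) τ lam * Lmat z y n τ lam
            - Lmat z y n τ lam * Umat z y n τ lam) i j) τ)
    ↔ (∀ n : ℤ, ∀ τ : ℝ,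
        HasDerivAt (z n) ((z (n - 1) τ - z n τ) * (1 + y n τ * z n τ)) τ ∧
        HasDerivAt (y n) (-((y (n + 1) τ - y n τ) * (1 + y n τ * z n τ))) τ) := by
  constructor
  · intro h n τ
    have hz := (hzd n τ).hasDerivAt
    have hy := (hyd n τ).hasDerivAt
    have hR : Real.sqrt (1 + y n τ * z n τ) ≠ 0 := Real.sqrt_ne_zero'.mpr (hpos n τ)
    have hRC : ((Real.sqrt (1 + y n τ * z n τ) : ℝ) : ℂ) ≠ 0 := by exact_mod_cast hR
    have hg0 : (1 : ℂ) + (y n τ : ℂ) * (z n τ : ℂ) ≠ 0 := by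
      have := (hpos n τ).ne'
      exact_mod_cast fun hc => this (by exact_mod_cast hc)
    have hR2 : ((Real.sqrt (1 + y n τ * z n τ) : ℝ) : ℂ) ^ 2
        = 1 + (y n τ : ℂ) * (z n τ : ℂ) := by
      rw [← Complex.ofReal_pow, Real.sq_sqrt (hpos n τ).le]; push_cast; ring
    have hn : n + 1 - 1 = n := by ring
    have key := fun (i j : Fin 2) =>
      (Lmat_entry_hasDerivAt z y n τ 2 _ _ hz hy (fun s => hpos n s) i j).unique
        (h 2 two_ne_zero n τ i j)
    have E00 := key 0 0
    have E01 := key 0 1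
    have E10 := key 1 0
    simp only [Umat, Lmat, hn, Matrix.sub_apply, Matrix.mul_apply, Fin.sum_univ_two,
        Matrix.smul_apply, Matrix.of_apply, Matrix.cons_val', Matrix.cons_val_zero,
        Matrix.cons_val_one, Matrix.head_cons, Matrix.empty_val', Matrix.cons_val_fin_one,
        Matrix.head_fin_const, Fin.mk_zero, Fin.mk_one, Fin.isValue, smul_eq_mul,
        Complex.real_smul, Complex.ofReal_inv] at E00 E01 E10
    push_cast at E00 E01 E10
    have hg0' : (1 : ℂ) + (z n τ : ℂ) * (y n τ : ℂ) ≠ 0 := by rwa [mul_comm]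
    field_simp [hRC, hg0, hg0'] at E00 E01 E10
    set R : ℂ := ((Real.sqrt (1 + y n τ * z n τ) : ℝ) : ℂ) with hRdef
    set Y : ℂ := (y n τ : ℂ) with hYdef
    set Z : ℂ := (z n τ : ℂ) with hZdef
    set Yp : ℂ := (y (n + 1) τ : ℂ) with hYpdef
    set Zp : ℂ := (z (n - 1) τ : ℂ) with hZpdef
    have hW4 : (R ^ 4 * 64 : ℂ) ≠ 0 := by simp [hRC]
    have hW5 : (R ^ 5 * (1 + Y * Z) * 768 : ℂ) ≠ 0 := by simp [hRC, hg0]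
    have hW5' : (R ^ 5 * (1 + Y * Z) * 256 : ℂ) ≠ 0 := by simp [hRC, hg0]
    have A00 : Y * ((deriv (z n) τ : ℝ) : ℂ) + ((deriv (y n) τ : ℝ) : ℂ) * Z
        = -((1 + Y * Z) * (Yp * Z - Y * Zp)) := by
      linear_combination (-1 : ℂ) * E00
    have A01 : ((deriv (z n) τ : ℝ) : ℂ) = (Zp - Z) * (1 + Y * Z) := by
      apply mul_left_cancel₀ (show (6 * (1 + Y * Z) : ℂ) ≠ 0 by simp [hg0])
      linear_combination E01 + (3 * Z) * A00
    have A10 : ((deriv (y n) τ : ℝ) : ℂ) = -((Yp - Y) * (1 + Y * Z)) := by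
      apply mul_left_cancel₀ (show (-2 * (1 + Y * Z) : ℂ) ≠ 0 by simp [hg0])
      linear_combination E10 - Y * A00
    constructor
    · have hzz : deriv (z n) τ = (z (n - 1) τ - z n τ) * (1 + y n τ * z n τ) := by
        rw [hZpdef, hZdef, hYdef] at A01; exact_mod_cast A01
      exact hzz ▸ hz
    · have hyy : deriv (y n) τ = -((y (n + 1) τ - y n τ) * (1 + y n τ * z n τ)) := by
        rw [hYpdef, hYdef, hZdef] at A10; exact_mod_cast A10
      exact hyy ▸ hy
  · intro h lam hlam n τ i j
    obtain ⟨hz, hy⟩ := h n τ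
    have key := Lmat_entry_hasDerivAt z y n τ lam _ _ hz hy (fun s => hpos n s) i j
    convert key using 1
    have hR : Real.sqrt (1 + y n τ * z n τ) ≠ 0 := Real.sqrt_ne_zero'.mpr (hpos n τ)
    have hRC : ((Real.sqrt (1 + y n τ * z n τ) : ℝ) : ℂ) ≠ 0 := by exact_mod_cast hR
    have hR2 : ((Real.sqrt (1 + y n τ * z n τ) : ℝ) : ℂ) ^ 2
        = 1 + (y n τ : ℂ) * (z n τ : ℂ) := by
      rw [← Complex.ofReal_pow, Real.sq_sqrt (hpos n τ).le]; push_cast; ring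
    have hg0 : (1 : ℂ) + (y n τ : ℂ) * (z n τ : ℂ) ≠ 0 := by
      have := (hpos n τ).ne'
      exact_mod_cast fun hc => this (by exact_mod_cast hc)
    have hg0' : (1 : ℂ) + (z n τ : ℂ) * (y n τ : ℂ) ≠ 0 := by rwa [mul_comm]
    have hn : n + 1 - 1 = n := by ring
    fin_cases i <;> fin_cases j <;>
      simp only [Umat, Lmat, hn, Matrix.sub_apply, Matrix.mul_apply, Fin.sum_univ_two,
        Matrix.smul_apply, Matrix.of_apply, Matrix.cons_val', Matrix.cons_val_zero,
        Matrix.cons_val_one, Matrix.head_cons, Matrix.empty_val', Matrix.cons_val_fin_one,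
        Matrix.head_fin_const, Fin.mk_zero, Fin.mk_one, Fin.isValue, smul_eq_mul,
        Complex.real_smul, Complex.ofReal_inv] <;>
      push_cast <;>
      field_simp [hlam, hRC, hg0, hg0'] <;>
      (try rw [div_eq_div_iff (by simp [hlam, hRC, hg0]) (by simp [hlam, hRC, hg0])]) <;>
      (try rw [div_eq_iff (by simp [hlam, hRC, hg0])]) <;>
      (try rw [eq_div_iff (by simp [hlam, hRC, hg0])]) <;>
      ring
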